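/- Let (φ_i)_{i∈ℕ} be functions from [0,∞) to [0,∞), each Lipschitz with Lipschitz constant L_i > 0, let g : [0,∞) → [0,∞) and a_i ≥ 0, and assume the series ∑_{j≠i} L_j·v_{ij} and ∑_{j≠i} L_j·w_{ij} converge for every i. Assume B := sup_i (∑_{j≠i} L_j·w_{ij} − ∑_{j≠i} L_j·v_{ij}) satisfies 0 ≤ B < ∞ and that ∑_i φ_i(0) < ∞, and set D := B·∑_i φ_i(0). Then for every x : ℕ → [0,∞) with ∑_i L_i·x_i < ∞ and for which the left-hand series converges absolutely, ∑_i [−a_i·L_i·g(x_i) + φ_i(x_i)·(−L_i·x_i − ∑_{j≠i} L_j·v_{ij} + ∑_{j≠i} L_j·w_{ij})] ≤ B·(∑_i L_i·x_i) + D. -/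
import Mathlib


/- STATEMENT 1: the Foster–Lyapunov drift inequality 𝓛h ≤ B·h + D
(Theorem 2.1, condition (C)) for h(x) = ∑ᵢ Lᵢ·xᵢ. -/
theorem glm_generator_foster_lyapunov_condition_C
    (φ : ℕ → ℝ → ℝ) (g : ℝ → ℝ) (L a : ℕ → ℝ) (W : ℕ → ℕ → ℝ)
    (v w : ℕ → ℕ → ℝ) (B D : ℝ)
    (hv : ∀ i j, v i j = max (-W i j) 0)
    (hw : ∀ i j, w i j = max (W i j) 0)
    (hφ_nonneg : ∀ i t, 0 ≤ t → 0 ≤ φ i t)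
    (hg_nonneg : ∀ t, 0 ≤ t → 0 ≤ g t)
    (hL : ∀ i, 0 < L i)
    (hφ_lip : ∀ i, LipschitzOnWith (Real.toNNReal (L i)) (φ i) (Set.Ici 0))
    (ha : ∀ i, 0 ≤ a i)
    (hSv : ∀ i, Summable (fun j : {j : ℕ // j ≠ i} => L j.1 * v i j.1))
    (hSw : ∀ i, Summable (fun j : {j : ℕ // j ≠ i} => L j.1 * w i j.1))
    (hBdd : BddAbove (Set.range fun i : ℕ =>
      (∑' j : {j : ℕ // j ≠ i}, L j.1 * w i j.1) -
      (∑' j : {j : ℕ // j ≠ i}, L j.1 * v i j.1)))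
    (hB : B = ⨆ i : ℕ,
      ((∑' j : {j : ℕ // j ≠ i}, L j.1 * w i j.1) -
       (∑' j : {j : ℕ // j ≠ i}, L j.1 * v i j.1)))
    (hB_nonneg : 0 ≤ B)
    (hφ0 : Summable (fun i : ℕ => φ i 0))
    (hD : D = B * ∑' i : ℕ, φ i 0) :
    ∀ x : ℕ → ℝ, (∀ i, 0 ≤ x i) →
      Summable (fun i : ℕ => L i * x i) →
      Summable (fun i : ℕ => |(-(a i) * L i * g (x i) + φ i (x i) *
        (-(L i * x i) - (∑' j : {j : ℕ // j ≠ i}, L j.1 * v i j.1)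
          + ∑' j : {j : ℕ // j ≠ i}, L j.1 * w i j.1))|) →
      (∑' i : ℕ, (-(a i) * L i * g (x i) + φ i (x i) *
        (-(L i * x i) - (∑' j : {j : ℕ // j ≠ i}, L j.1 * v i j.1)
          + ∑' j : {j : ℕ // j ≠ i}, L j.1 * w i j.1)))
        ≤ B * (∑' i : ℕ, L i * x i) + D := by
  intro x hx hSx habs
  have hsum := habs.of_abs
  have hterm : ∀ i : ℕ,
      (-(a i) * L i * g (x i) + φ i (x i) *
        (-(L i * x i) - (∑' j : {j : ℕ // j ≠ i}, L j.1 * v i j.1)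
          + ∑' j : {j : ℕ // j ≠ i}, L j.1 * w i j.1))
      ≤ B * (L i * x i) + B * φ i 0 := by
    intro i
    set Sv := ∑' j : {j : ℕ // j ≠ i}, L j.1 * v i j.1
    set Sw := ∑' j : {j : ℕ // j ≠ i}, L j.1 * w i j.1
    have hSB : Sw - Sv ≤ B := by
      rw [hB]
      exact le_ciSup hBdd i
    have hφx : 0 ≤ φ i (x i) := hφ_nonneg i (x i) (hx i)
    have hφle : φ i (x i) ≤ L i * x i + φ i 0 := by
      have h := (hφ_lip i).dist_le_mul (x i) (Set.mem_Ici.2 (hx i))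
        0 (Set.mem_Ici.2 le_rfl)
      rw [Real.dist_eq, Real.dist_eq, sub_zero,
        abs_of_nonneg (hx i)] at h
      have hc : (Real.toNNReal (L i) : ℝ) = L i :=
        Real.coe_toNNReal _ (hL i).le
      rw [hc] at h
      have := le_of_abs_le h
      linarith
    have hag : 0 ≤ a i * (L i * g (x i)) :=
      mul_nonneg (ha i) (mul_nonneg (hL i).le (hg_nonneg _ (hx i)))
    have hLx : 0 ≤ L i * x i := mul_nonneg (hL i).le (hx i)
    nlinarith [mul_nonneg hφx hLx, mul_le_mul_of_nonneg_left hSB hφx,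
      mul_le_mul_of_nonneg_left hφle hB_nonneg]
  have hsum2 : Summable (fun i : ℕ => B * (L i * x i) + B * φ i 0) :=
    (hSx.mul_left B).add (hφ0.mul_left B)
  calc _ ≤ ∑' i : ℕ, (B * (L i * x i) + B * φ i 0) :=
        Summable.tsum_le_tsum hterm hsum hsum2
    _ = B * (∑' i : ℕ, L i * x i) + D := by
        rw [Summable.tsum_add (hSx.mul_left B) (hφ0.mul_left B),
          tsum_mul_left, tsum_mul_left, hD]
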